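/- Let φ : [1,∞) → [0,∞) be an increasing function with ∫₁^∞ φ(t)/t² dt < ∞, and let a : ℕ → ℝ be a sequence satisfying |a(m+n) − a(m) − a(n)| ≤ φ(m+n) for all m, n ≥ 1. Then the limit lim_{n→∞} a(n)/n exists and is a (finite) real number. -/

import Mathlib

open Filter Topology MeasureTheory Set

noncomputable def dbeT (φ : ℝ → ℝ) (x : ℝ) : ℝ := ∫ t in Set.Ioi x, φ t / t ^ 2

section dbe
variable {φ : ℝ → ℝ}

lemma dbeT_diff (hint : IntegrableOn (fun t : ℝ => φ t / t ^ 2) (Set.Ici (1 : ℝ)))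
    {x y : ℝ} (hx : 1 ≤ x) (hxy : x ≤ y) :
    dbeT φ x - dbeT φ y = ∫ t in Set.Ioc x y, φ t / t ^ 2 := by
  have hu : Set.Ioc x y ∪ Set.Ioi y = Set.Ioi x := Set.Ioc_union_Ioi_eq_Ioi hxy
  have h1 : IntegrableOn (fun t : ℝ => φ t / t ^ 2) (Set.Ioc x y) :=
    hint.mono_set (fun t ht => le_trans hx (le_of_lt ht.1))
  have h2 : IntegrableOn (fun t : ℝ => φ t / t ^ 2) (Set.Ioi y) :=
    hint.mono_set (fun t ht => le_trans (le_trans hx hxy) (le_of_lt ht))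
  have := setIntegral_union (Set.Ioc_disjoint_Ioi le_rfl) measurableSet_Ioi h1 h2
    (f := fun t : ℝ => φ t / t ^ 2) (μ := volume)
  rw [hu] at this
  simp only [dbeT, this]
  ring

lemma dbeT_nonneg (hnonneg : ∀ t : ℝ, 1 ≤ t → 0 ≤ φ t) {x : ℝ} (hx : 1 ≤ x) :
    0 ≤ dbeT φ x := by
  apply setIntegral_nonneg measurableSet_Ioi
  intro t ht
  have h1 : (1:ℝ) ≤ t := le_trans hx (le_of_lt ht)
  have := hnonneg t h1
  positivity

lemma dbeT_anti (hnonneg : ∀ t : ℝ, 1 ≤ t → 0 ≤ φ t)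
    (hint : IntegrableOn (fun t : ℝ => φ t / t ^ 2) (Set.Ici (1 : ℝ)))
    {x y : ℝ} (hx : 1 ≤ x) (hxy : x ≤ y) : dbeT φ y ≤ dbeT φ x := by
  have h := dbeT_diff hint hx hxy
  have : 0 ≤ ∫ t in Set.Ioc x y, φ t / t ^ 2 := by
    apply setIntegral_nonneg measurableSet_Ioc
    intro t ht
    have h1 : (1:ℝ) ≤ t := le_trans hx (le_of_lt ht.1)
    have := hnonneg t h1
    positivity
  linarith

lemma dbeT_key (hmono : ∀ s t : ℝ, 1 ≤ s → s ≤ t → φ s ≤ φ t)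
    (hnonneg : ∀ t : ℝ, 1 ≤ t → 0 ≤ φ t)
    (hint : IntegrableOn (fun t : ℝ => φ t / t ^ 2) (Set.Ici (1 : ℝ)))
    {x y : ℝ} (hx : 1 ≤ x) (hxy : x ≤ y) :
    (y - x) * (φ x / y ^ 2) ≤ dbeT φ x - dbeT φ y := by
  rw [dbeT_diff hint hx hxy]
  have h1 : IntegrableOn (fun t : ℝ => φ t / t ^ 2) (Set.Ioc x y) :=
    hint.mono_set (fun t ht => le_trans hx (le_of_lt ht.1))
  have hc : ∫ t in Set.Ioc x y, (φ x / y ^ 2) = (y - x) * (φ x / y ^ 2) := by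
    rw [setIntegral_const]
    simp [Real.volume_Ioc, ENNReal.toReal_ofReal (sub_nonneg.2 hxy), smul_eq_mul, hxy]
  rw [← hc]
  apply setIntegral_mono_on (integrableOn_const (by simp [Real.volume_Ioc])) h1
    measurableSet_Ioc
  intro t ht
  have h1t : (1:ℝ) ≤ t := le_trans hx (le_of_lt ht.1)
  have hφ : φ x ≤ φ t := hmono x t hx (le_of_lt ht.1)
  have ht2 : (0:ℝ) < t ^ 2 := by positivity
  have h1y : (1:ℝ) ≤ y := hx.trans hxy
  have hy2 : (0:ℝ) < y ^ 2 := by positivity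
  have hsq : t ^ 2 ≤ y ^ 2 := by nlinarith [ht.2, h1t]
  calc φ x / y ^ 2 ≤ φ t / y ^ 2 := by gcongr
    _ ≤ φ t / t ^ 2 := by
        have h0 : 0 ≤ φ t := hnonneg t h1t
        have h0t : (0:ℝ) < t := lt_of_lt_of_le zero_lt_one h1t
        gcongr

lemma dbeT_tendsto (hint : IntegrableOn (fun t : ℝ => φ t / t ^ 2) (Set.Ici (1 : ℝ))) :
    Tendsto (fun n : ℕ => dbeT φ n) atTop (𝓝 0) := by
  have hIoi1 : IntegrableOn (fun t : ℝ => φ t / t ^ 2) (Set.Ioi (1:ℝ)) :=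
    hint.mono_set Set.Ioi_subset_Ici_self
  have hunion : (⋃ n : ℕ, Set.Ioc (1:ℝ) (n:ℝ)) = Set.Ioi (1:ℝ) := by
    ext t
    simp only [Set.mem_iUnion, Set.mem_Ioc, Set.mem_Ioi]
    constructor
    · rintro ⟨n, h1, _⟩; exact h1
    · intro h1
      obtain ⟨n, hn⟩ := exists_nat_ge t
      exact ⟨n, h1, hn⟩
  have hmonoS : Monotone (fun n : ℕ => Set.Ioc (1:ℝ) (n:ℝ)) := by
    intro i j hij
    exact Set.Ioc_subset_Ioc le_rfl (by exact_mod_cast hij)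
  have htend := tendsto_setIntegral_of_monotone (fun n : ℕ => measurableSet_Ioc)
    hmonoS (by rw [hunion]; exact hIoi1) (f := fun t : ℝ => φ t / t ^ 2) (μ := volume)
  rw [hunion] at htend
  have heq : ∀ᶠ n : ℕ in atTop, dbeT φ n =
      dbeT φ 1 - ∫ t in Set.Ioc (1:ℝ) (n:ℝ), φ t / t ^ 2 := by
    filter_upwards [eventually_ge_atTop 1] with n hn
    have h1n : (1:ℝ) ≤ (n:ℝ) := by exact_mod_cast hn
    have := dbeT_diff hint le_rfl h1n
    linarith
  have h2 : Tendsto (fun n : ℕ => dbeT φ 1 - ∫ t in Set.Ioc (1:ℝ) (n:ℝ), φ t / t ^ 2)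
      atTop (𝓝 (dbeT φ 1 - dbeT φ 1)) := tendsto_const_nhds.sub htend
  rw [sub_self] at h2
  exact h2.congr' (heq.mono fun n h => h.symm)

lemma dbe_upper (hmono : ∀ s t : ℝ, 1 ≤ s → s ≤ t → φ s ≤ φ t)
    (hnonneg : ∀ t : ℝ, 1 ≤ t → 0 ≤ φ t)
    (hint : IntegrableOn (fun t : ℝ => φ t / t ^ 2) (Set.Ici (1 : ℝ)))
    (a : ℕ → ℝ)
    (ha : ∀ m n : ℕ, 1 ≤ m → 1 ≤ n → a (m + n) ≤ a m + a n + φ ((m : ℝ) + (n : ℝ)))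
    (m : ℕ) (hm : 1 ≤ m) (A : ℝ) (hA : ∀ k, m ≤ k → k < 2 * m → a k ≤ k * A) :
    ∀ n, m ≤ n → a n ≤ n * A + 8 * n * (dbeT φ (2 * m) - dbeT φ (2 * n)) := by
  have hanti : ∀ {x y : ℝ}, 1 ≤ x → x ≤ y → dbeT φ y ≤ dbeT φ x :=
    fun hx hxy => dbeT_anti hnonneg hint hx hxy
  have hkey : ∀ {x y : ℝ}, 1 ≤ x → x ≤ y →
      (y - x) * (φ x / y ^ 2) ≤ dbeT φ x - dbeT φ y :=
    fun hx hxy => dbeT_key hmono hnonneg hint hx hxy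
  intro n
  induction n using Nat.strong_induction_on with
  | _ n IH =>
  intro hn
  have hm1 : (1:ℝ) ≤ 2 * (m:ℕ) := by
    have : (1:ℝ) ≤ (m:ℝ) := by exact_mod_cast hm
    linarith
  have hmncast : (2:ℝ) * m ≤ 2 * n := by
    have : (m:ℝ) ≤ n := by exact_mod_cast hn
    linarith
  by_cases h2 : n < 2 * m
  · have h1 := hA n hn h2
    have h2' : dbeT φ (2 * (n:ℝ)) ≤ dbeT φ (2 * (m:ℝ)) := hanti hm1 hmncast
    have hn0 : (0:ℝ) ≤ n := Nat.cast_nonneg n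
    nlinarith
  · push_neg at h2
    set q := n / 2 with hqdef
    set p := n - q with hpdef
    have hq1 : m ≤ q := by omega
    have hpm : m ≤ p := by omega
    have hqp : q ≤ p := by omega
    have hpq : p + q = n := by omega
    have hp_lt : p < n := by omega
    have hq_lt : q < n := by omega
    have hn2p : n ≤ 2 * p := by omega
    have h4q : n ≤ 4 * q := by omega
    have IHp := IH p hp_lt hpm
    have IHq := IH q hq_lt hq1
    have hsplit := ha p q (by omega) (by omega)
    rw [hpq] at hsplit
    have hcast : (p:ℝ) + q = n := by exact_mod_cast hpq
    have hq0 : (1:ℝ) ≤ (q:ℝ) := by exact_mod_cast (by omega : 1 ≤ q)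
    have hp0 : (1:ℝ) ≤ (p:ℝ) := by exact_mod_cast (by omega : 1 ≤ p)
    have hn0 : (0:ℝ) < (n:ℝ) := by exact_mod_cast (by omega : 0 < n)
    have hn1 : (1:ℝ) ≤ (n:ℝ) := by exact_mod_cast (by omega : 1 ≤ n)
    have hφpq : φ ((p:ℝ) + q) = φ (n:ℝ) := by rw [hcast]
    rw [hφpq] at hsplit
    have hT1 : dbeT φ (2 * (p:ℝ)) ≤ dbeT φ (2 * (q:ℝ)) := by
      apply hanti (by linarith)
      have : (q:ℝ) ≤ p := by exact_mod_cast hqp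
      linarith
    have hK := hkey (x := 2 * (p:ℝ)) (y := 2 * (n:ℝ)) (by linarith)
      (by exact_mod_cast (by omega : 2 * p ≤ 2 * n))
    have hφn0 : 0 ≤ φ (n:ℝ) := hnonneg _ hn1
    have hφ2p : φ (n:ℝ) ≤ φ (2 * (p:ℝ)) := by
      apply hmono _ _ hn1
      exact_mod_cast hn2p
    have hsq : (0:ℝ) < (2 * (n:ℝ)) ^ 2 := by positivity
    have hfin : φ (n:ℝ) ≤ 8 * n * (dbeT φ (2 * (p:ℝ)) - dbeT φ (2 * (n:ℝ))) := by
      have hlen : (2:ℝ) * q ≤ 2 * (n:ℝ) - 2 * p := by linarith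
      have e1 : (2 * (q:ℝ)) * (φ (n:ℝ) / (2 * (n:ℝ)) ^ 2)
          ≤ (2 * (n:ℝ) - 2 * p) * (φ (2 * (p:ℝ)) / (2 * (n:ℝ)) ^ 2) := by
        apply mul_le_mul hlen (by gcongr) (by positivity)
        linarith
      have e2 : (2 * (q:ℝ)) * (φ (n:ℝ) / (2 * (n:ℝ)) ^ 2)
          ≤ dbeT φ (2 * (p:ℝ)) - dbeT φ (2 * (n:ℝ)) := le_trans e1 hK
      have e3 : φ (n:ℝ) ≤ 8 * n * ((2 * (q:ℝ)) * (φ (n:ℝ) / (2 * (n:ℝ)) ^ 2)) := by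
        have heq : 8 * (n:ℝ) * ((2 * (q:ℝ)) * (φ (n:ℝ) / (2 * (n:ℝ)) ^ 2))
            = 4 * q * φ (n:ℝ) / n := by
          field_simp
          ring
        rw [heq, le_div_iff₀ hn0]
        have h4q' : (n:ℝ) ≤ 4 * q := by exact_mod_cast h4q
        nlinarith
      calc φ (n:ℝ) ≤ 8 * n * ((2 * (q:ℝ)) * (φ (n:ℝ) / (2 * (n:ℝ)) ^ 2)) := e3
        _ ≤ 8 * n * (dbeT φ (2 * (p:ℝ)) - dbeT φ (2 * (n:ℝ))) := by
            apply mul_le_mul_of_nonneg_left e2 (by positivity)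
    have s1 : 8 * (q:ℝ) * (dbeT φ (2 * (m:ℝ)) - dbeT φ (2 * (q:ℝ)))
        ≤ 8 * q * (dbeT φ (2 * (m:ℝ)) - dbeT φ (2 * (p:ℝ))) := by
      apply mul_le_mul_of_nonneg_left (by linarith) (by positivity)
    have s2 : (p:ℝ) * A + (q:ℝ) * A = n * A := by rw [← hcast]; ring
    have s3 : 8 * (p:ℝ) * (dbeT φ (2 * (m:ℝ)) - dbeT φ (2 * (p:ℝ)))
        + 8 * (q:ℝ) * (dbeT φ (2 * (m:ℝ)) - dbeT φ (2 * (p:ℝ)))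
        = 8 * (n:ℝ) * (dbeT φ (2 * (m:ℝ)) - dbeT φ (2 * (p:ℝ))) := by
      rw [← hcast]; ring
    have s4 : 8 * (n:ℝ) * (dbeT φ (2 * (m:ℝ)) - dbeT φ (2 * (n:ℝ)))
        = 8 * (n:ℝ) * (dbeT φ (2 * (m:ℝ)) - dbeT φ (2 * (p:ℝ)))
        + 8 * (n:ℝ) * (dbeT φ (2 * (p:ℝ)) - dbeT φ (2 * (n:ℝ))) := by ring
    linarith

end dbe
/-- De Bruijn–Erdős generalisation of Fekete's lemma (two-sided version): if
`φ` is increasing on `[1,∞)`, nonnegative there, with `∫₁^∞ φ(t)/t² dt < ∞`, and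
`|a(m+n) − a(m) − a(n)| ≤ φ(m+n)` for all `m, n ≥ 1`, then `a(n)/n` converges to a
finite real limit. -/
theorem deBruijnErdos_two_sided (φ : ℝ → ℝ)
    (hmono : ∀ s t : ℝ, 1 ≤ s → s ≤ t → φ s ≤ φ t)
    (hnonneg : ∀ t : ℝ, 1 ≤ t → 0 ≤ φ t)
    (hint : MeasureTheory.IntegrableOn (fun t : ℝ => φ t / t ^ 2) (Set.Ici (1 : ℝ)))
    (a : ℕ → ℝ)
    (ha : ∀ m n : ℕ, 1 ≤ m → 1 ≤ n → |a (m + n) - a m - a n| ≤ φ ((m : ℝ) + (n : ℝ))) :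
    ∃ L : ℝ, Tendsto (fun n : ℕ => a n / n) atTop (𝓝 L) := by
  set f : ℕ → ℝ := fun n => a n / n with hf
  have hsub : ∀ m n : ℕ, 1 ≤ m → 1 ≤ n → a (m + n) ≤ a m + a n + φ ((m:ℝ) + (n:ℝ)) := by
    intro m n hm hn
    have := (abs_le.1 (ha m n hm hn)).2
    linarith
  have hsubneg : ∀ m n : ℕ, 1 ≤ m → 1 ≤ n →
      (fun j => -(a j)) (m + n) ≤ (fun j => -(a j)) m + (fun j => -(a j)) n + φ ((m:ℝ) + (n:ℝ)) := by
    intro m n hm hn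
    have := (abs_le.1 (ha m n hm hn)).1
    simp only
    linarith
  -- global bounds via the block [1,2)
  have e21 : (2:ℝ) * ((1:ℕ):ℝ) = 2 := by norm_num
  have hup1 := dbe_upper hmono hnonneg hint a hsub 1 le_rfl (a 1)
    (by
      intro k h1 h2
      have hk : k = 1 := (by omega)
      subst hk; simp)
  have hlo1 := dbe_upper hmono hnonneg hint (fun j => -(a j)) hsubneg 1 le_rfl (-(a 1))
    (by
      intro k h1 h2
      have hk : k = 1 := (by omega)
      subst hk; simp)
  have hub : ∀ᶠ n : ℕ in atTop, f n ≤ a 1 + 8 * dbeT φ 2 := by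
    filter_upwards [eventually_ge_atTop 1] with n hn
    have h := hup1 n hn
    rw [e21] at h
    have hn1 : (1:ℝ) ≤ n := by exact_mod_cast hn
    have hn0 : (0:ℝ) < n := by linarith
    have hT2n : 0 ≤ dbeT φ (2 * (n:ℝ)) := dbeT_nonneg hnonneg (by linarith)
    have hnT : 0 ≤ (n:ℝ) * dbeT φ (2 * (n:ℝ)) := mul_nonneg (by linarith) hT2n
    show a n / n ≤ a 1 + 8 * dbeT φ 2
    rw [div_le_iff₀ hn0]
    nlinarith
  have hlb : ∀ᶠ n : ℕ in atTop, a 1 - 8 * dbeT φ 2 ≤ f n := by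
    filter_upwards [eventually_ge_atTop 1] with n hn
    have h := hlo1 n hn
    rw [e21] at h
    have hn1 : (1:ℝ) ≤ n := by exact_mod_cast hn
    have hn0 : (0:ℝ) < n := by linarith
    have hT2n : 0 ≤ dbeT φ (2 * (n:ℝ)) := dbeT_nonneg hnonneg (by linarith)
    have hnT : 0 ≤ (n:ℝ) * dbeT φ (2 * (n:ℝ)) := mul_nonneg (by linarith) hT2n
    show a 1 - 8 * dbeT φ 2 ≤ a n / n
    rw [le_div_iff₀ hn0]
    nlinarith
  have hbddle : IsBoundedUnder (· ≤ ·) atTop f := ⟨a 1 + 8 * dbeT φ 2, by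
    rw [eventually_map]; exact hub⟩
  have hbddge : IsBoundedUnder (· ≥ ·) atTop f := ⟨a 1 - 8 * dbeT φ 2, by
    rw [eventually_map]; exact hlb⟩
  set l := liminf f atTop with hl
  have key : ∀ δ : ℝ, 0 < δ → ∀ᶠ n : ℕ in atTop, f n ≤ l + 80 * δ := by
    intro δ hδ
    obtain ⟨M₁, hM₁⟩ := Metric.tendsto_atTop.1 (dbeT_tendsto hint) δ hδ
    have hM₁' : ∀ k : ℕ, M₁ ≤ k → dbeT φ k < δ := by
      intro k hk
      have := hM₁ k hk
      rw [Real.dist_eq, sub_zero] at this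
      exact lt_of_abs_lt this
    have hev : ∀ᶠ s : ℕ in atTop, l - δ < f s :=
      eventually_lt_of_lt_liminf (by rw [← hl]; linarith) hbddge
    obtain ⟨N₀, hN₀⟩ := eventually_atTop.1 hev
    have hfreq : ∃ᶠ s : ℕ in atTop, f s < l + δ :=
      frequently_lt_of_liminf_lt hbddle.isCoboundedUnder_ge (by rw [← hl]; linarith)
    obtain ⟨m, hfm, hmge⟩ := (hfreq.and_eventually (eventually_ge_atTop (max (max M₁ N₀) 1))).exists
    have hmM₁ : M₁ ≤ m := le_trans (le_trans (le_max_left _ _) (le_max_left _ _)) hmge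
    have hmN₀ : N₀ ≤ m := le_trans (le_trans (le_max_right _ _) (le_max_left _ _)) hmge
    have hm1 : 1 ≤ m := le_trans (le_max_right _ _) hmge
    have hm1' : (1:ℝ) ≤ m := by exact_mod_cast hm1
    have hm0 : (0:ℝ) < m := by linarith
    -- tail bounds
    have hT4m : dbeT φ (4 * (m:ℝ)) < δ := by
      have := hM₁' (4 * m) (by omega)
      have hc : ((4 * m : ℕ):ℝ) = 4 * (m:ℝ) := by push_cast; ring
      rwa [hc] at this
    have hT2m : dbeT φ (2 * (m:ℝ)) < δ := by
      have := hM₁' (2 * m) (by omega)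
      have hc : ((2 * m : ℕ):ℝ) = 2 * (m:ℝ) := by push_cast; ring
      rwa [hc] at this
    have hT8m0 : 0 ≤ dbeT φ (8 * (m:ℝ)) := dbeT_nonneg hnonneg (by linarith)
    -- φ(4m) ≤ 16 m δ
    have hφ4m0 : 0 ≤ φ (4 * (m:ℝ)) := hnonneg _ (by linarith)
    have hφ4m : φ (4 * (m:ℝ)) ≤ 16 * m * δ := by
      have hK := dbeT_key hmono hnonneg hint (x := 4 * (m:ℝ)) (y := 8 * (m:ℝ))
        (by linarith) (by linarith)
      have heq : (8 * (m:ℝ) - 4 * m) * (φ (4 * (m:ℝ)) / (8 * (m:ℝ)) ^ 2)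
          = φ (4 * (m:ℝ)) / (16 * m) := by
        field_simp
        ring
      rw [heq] at hK
      have h16 : (0:ℝ) < 16 * (m:ℝ) := by linarith
      have hd : φ (4 * (m:ℝ)) / (16 * m) ≤ δ := by linarith
      rw [div_le_iff₀ h16] at hd
      linarith [mul_le_mul_of_nonneg_right (le_refl δ) (le_of_lt h16), hd]
    have hφ2m : φ ((m:ℝ) + (m:ℝ)) ≤ φ (4 * (m:ℝ)) := hmono _ _ (by linarith) (by linarith)
    -- a m bound
    have ham : a m ≤ (m:ℝ) * (l + δ) := by
      have h1 : a m / m < l + δ := hfm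
      rw [div_lt_iff₀ hm0] at h1
      linarith
    -- a (4m) bound
    have h4m : a (4 * m) ≤ 4 * a m + 3 * φ (4 * (m:ℝ)) := by
      have t1 := hsub m m hm1 hm1
      have t2 := hsub (m + m) (m + m) (by omega) (by omega)
      rw [show (m + m) + (m + m) = 4 * m by ring] at t2
      have hc : ((m + m : ℕ):ℝ) + ((m + m : ℕ):ℝ) = 4 * (m:ℝ) := by push_cast; ring
      rw [hc] at t2
      linarith
    -- block bound
    have hA' : ∀ k, m ≤ k → k < 2 * m → a k ≤ (k:ℝ) * (l + 72 * δ) := by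
      intro k hk1 hk2
      have hks : k + (4 * m - k) = 4 * m := by omega
      have habs := ha k (4 * m - k) (by omega) (by omega)
      rw [hks] at habs
      have hscast : ((4 * m - k : ℕ):ℝ) = 4 * (m:ℝ) - k := by
        rw [Nat.cast_sub (by omega : k ≤ 4 * m)]
        push_cast
        ring
      have hargs : (k:ℝ) + ((4 * m - k : ℕ):ℝ) = 4 * (m:ℝ) := by rw [hscast]; ring
      rw [hargs] at habs
      have hub4 := (abs_le.1 habs).1
      have hkm : (m:ℝ) ≤ k := by exact_mod_cast hk1
      have hk2m : (k:ℝ) ≤ 2 * m := by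
        have : (k:ℝ) < 2 * m := by exact_mod_cast hk2
        linarith
      have hs0 : (0:ℝ) < ((4 * m - k : ℕ):ℝ) := by rw [hscast]; linarith
      have hflb := hN₀ (4 * m - k) (by omega)
      have haslb : ((4 * m - k : ℕ):ℝ) * (l - δ) ≤ a (4 * m - k) := by
        have h1 : l - δ < a (4 * m - k) / ((4 * m - k : ℕ):ℝ) := hflb
        rw [lt_div_iff₀ hs0] at h1
        linarith
      rw [hscast] at haslb
      have hmd : (m:ℝ) * δ ≤ (k:ℝ) * δ := mul_le_mul_of_nonneg_right hkm hδ.le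
      have hkd : 0 ≤ (k:ℝ) * δ := mul_nonneg (by linarith) hδ.le
      nlinarith
    have hup := dbe_upper hmono hnonneg hint a hsub m hm1 (l + 72 * δ) hA'
    filter_upwards [eventually_ge_atTop m, eventually_ge_atTop 1] with n hnm hn1
    have h := hup n hnm
    have hn1' : (1:ℝ) ≤ n := by exact_mod_cast hn1
    have hn0 : (0:ℝ) < n := by linarith
    have hT2n : 0 ≤ dbeT φ (2 * (n:ℝ)) := dbeT_nonneg hnonneg (by linarith)
    have hstep : 8 * (n:ℝ) * (dbeT φ (2 * (m:ℝ)) - dbeT φ (2 * (n:ℝ))) ≤ 8 * n * δ := by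
      have hd : dbeT φ (2 * (m:ℝ)) - dbeT φ (2 * (n:ℝ)) ≤ δ := by linarith
      exact mul_le_mul_of_nonneg_left hd (by positivity)
    show a n / n ≤ l + 80 * δ
    rw [div_le_iff₀ hn0]
    nlinarith
  have hls : limsup f atTop ≤ l := by
    by_contra hcon
    push_neg at hcon
    set δ := (limsup f atTop - l) / 160 with hδdef
    have hδ : 0 < δ := by rw [hδdef]; linarith
    have h2 : limsup f atTop ≤ l + 80 * δ :=
      limsup_le_of_le hbddge.isCoboundedUnder_le (key δ hδ)
    rw [hδdef] at h2
    linarith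
  have hsl : l ≤ limsup f atTop := by rw [hl]; exact liminf_le_limsup hbddle hbddge
  exact ⟨l, tendsto_of_liminf_eq_limsup hl.symm (le_antisymm hls hsl) hbddle hbddge⟩
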